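/- arXiv:2206.00526 — 4 statements merged into one kernel-verified Lean document; each statement's English description precedes it below -/
import Mathlib

section
/- Let N be a network with source s and sink t, let x be a maximum s-t flow, and let B be a cycle in the residual network N_x. Let x' = x + u_x(B)·χ^B be the flow obtained by augmenting x along B. Then the set of nodes reachable from s in the residual network is unchanged: V_x(s) = V_{x'}(s); similarly V_x(t) = V_{x'}(t) and hence the set of 'between-cut' nodes V \ (V_x(s) ∪ V_x(t)) is also unchanged. -/
/-- A chain of arcs from `p` to `q`: each arc's tail matches the current vertex. -/
def ArcChain {W E : Type*} (tl hd : E → W) : W → W → List E → Prop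
  | p, q, [] => p = q
  | p, q, e :: l => tl e = p ∧ ArcChain tl hd (hd e) q l

/-- A network: a directed multigraph with a source, a sink and integral arc capacities. -/
structure Network (V A : Type*) where
  tail : A → V
  head : A → V
  s : V
  t : V
  u : A → ℤ

/-- Transit times extended to residual (backward) arcs by negation. -/
def resTT {A : Type*} (τ : A → ℕ) : A ⊕ A → ℤ :=
  Sum.elim (fun a => (τ a : ℤ)) (fun a => -(τ a : ℤ))

/-- Costs extended to residual (backward) arcs by negation. -/
def resC {A : Type*} (c : A → ℤ) : A ⊕ A → ℤ := Sum.elim c (fun a => -c a)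

/-- The partial (prefix) sums of `g` along a list, starting with `0`. -/
def psums {E : Type*} (g : E → ℤ) : List E → List ℤ
  | [] => [0]
  | e :: l => 0 :: (psums g l).map (fun z => g e + z)

/-- Minimum partial sum (the `0` seed is itself always a partial sum). -/
def hlo {E : Type*} (g : E → ℤ) (l : List E) : ℤ := (psums g l).foldr min 0

/-- Maximum partial sum. -/
def hhi {E : Type*} (g : E → ℤ) (l : List E) : ℤ := (psums g l).foldr max 0

/-- The height of a walk: maximum minus minimum partial sum of transit times. -/
def spreadOf {E : Type*} (g : E → ℤ) (l : List E) : ℤ := hhi g l - hlo g l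

namespace Network
variable {V A : Type*} (N : Network V A)

/-- Tail of a residual arc: `Sum.inl a` is the forward copy of `a`, `Sum.inr a` backward. -/
def resTail : A ⊕ A → V := Sum.elim N.tail N.head

def resHead : A ⊕ A → V := Sum.elim N.head N.tail

/-- Residual capacity of a residual arc with respect to a flow `x`. -/
def resCap (x : A → ℤ) : A ⊕ A → ℤ := Sum.elim (fun a => N.u a - x a) x

/-- A walk in the residual network `N_x`. -/
def IsResWalk (x : A → ℤ) (p q : V) (l : List (A ⊕ A)) : Prop :=
  ArcChain N.resTail N.resHead p q l ∧ ∀ e ∈ l, 0 < N.resCap x e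

/-- A cycle in the residual network `N_x`. -/
def IsResCycle (x : A → ℤ) (p : V) (l : List (A ⊕ A)) : Prop :=
  N.IsResWalk x p p l ∧ l ≠ [] ∧ (l.map N.resHead).Nodup

/-- A feasible static `s`-`t` flow: capacities and conservation at intermediate nodes. -/
def Feasible [Fintype A] [DecidableEq V] (x : A → ℤ) : Prop :=
  (∀ a, 0 ≤ x a ∧ x a ≤ N.u a) ∧
  ∀ v, v ≠ N.s → v ≠ N.t →
    (∑ a : A, if N.head a = v then x a else 0) = (∑ a : A, if N.tail a = v then x a else 0)

/-- The value of a flow: net outflow of the source. -/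
def value [Fintype A] [DecidableEq V] (x : A → ℤ) : ℤ :=
  (∑ a : A, if N.tail a = N.s then x a else 0) - (∑ a : A, if N.head a = N.s then x a else 0)

/-- A maximum `s`-`t` flow: feasible and of maximal value. -/
def IsMaxFlow [Fintype A] [DecidableEq V] (x : A → ℤ) : Prop :=
  N.Feasible x ∧ ∀ y : A → ℤ, N.Feasible y → N.value y ≤ N.value x

/-- Reachability in the residual network `N_x`. -/
def ResReach (x : A → ℤ) : V → V → Prop :=
  Relation.ReflTransGen
    (fun p q => ∃ e : A ⊕ A, 0 < N.resCap x e ∧ N.resTail e = p ∧ N.resHead e = q)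

end Network


section AuxChain

variable {W E : Type*} {tl hd : E → W}

theorem arcChain_nil {p q : W} : ArcChain tl hd p q [] ↔ p = q := Iff.rfl

theorem arcChain_cons {p q : W} {e : E} {l : List E} :
    ArcChain tl hd p q (e :: l) ↔ tl e = p ∧ ArcChain tl hd (hd e) q l := Iff.rfl

theorem arcChain_append {p q r : W} {l1 l2 : List E} (h1 : ArcChain tl hd p q l1)
    (h2 : ArcChain tl hd q r l2) : ArcChain tl hd p r (l1 ++ l2) := by
  induction l1 generalizing p with
  | nil => obtain rfl := arcChain_nil.mp h1; exact h2
  | cons e l ih => exact ⟨h1.1, ih h1.2⟩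

theorem arcChain_split {p q : W} {l1 l2 : List E} (h : ArcChain tl hd p q (l1 ++ l2)) :
    ∃ r, ArcChain tl hd p r l1 ∧ ArcChain tl hd r q l2 := by
  induction l1 generalizing p with
  | nil => exact ⟨p, rfl, h⟩
  | cons e l ih =>
    obtain ⟨r, h1, h2⟩ := ih h.2
    exact ⟨r, ⟨h.1, h1⟩, h2⟩

theorem arcChain_revMap {W E E' : Type*} {tl hd : E → W} {tl' hd' : E' → W} (f : E → E')
    (htl : ∀ e, tl' (f e) = hd e) (hhd : ∀ e, hd' (f e) = tl e)
    {p q : W} {l : List E} (h : ArcChain tl hd p q l) :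
    ArcChain tl' hd' q p ((l.map f).reverse) := by
  induction l generalizing p with
  | nil => exact (arcChain_nil.mp h).symm
  | cons e l ih =>
    have h1 := ih h.2
    have h2 : ArcChain tl' hd' (hd e) p [f e] := ⟨htl e, (hhd e).trans h.1⟩
    simpa using arcChain_append h1 h2

end AuxChain

section AuxNet

variable {V A : Type*} (N : Network V A)

theorem walk_reach {x : A → ℤ} {p q : V} {l : List (A ⊕ A)}
    (hc : ArcChain N.resTail N.resHead p q l) (hpos : ∀ e ∈ l, 0 < N.resCap x e) :
    N.ResReach x p q := by
  induction l generalizing p with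
  | nil => obtain rfl := arcChain_nil.mp hc; exact Relation.ReflTransGen.refl
  | cons e l ih =>
    exact Relation.ReflTransGen.head ⟨e, hpos e (by simp), hc.1, rfl⟩
      (ih hc.2 fun f hf => hpos f (by simp [hf]))

theorem around {y : A → ℤ} {p : V} {l : List (A ⊕ A)}
    (hc : ArcChain N.resTail N.resHead p p l)
    (hpos : ∀ f ∈ l, 0 < N.resCap y f) {e : A ⊕ A} (he : e ∈ l) :
    N.ResReach y (N.resHead e) (N.resTail e) := by
  obtain ⟨l1, l2, rfl⟩ := List.append_of_mem he
  obtain ⟨r, h1, h2⟩ := arcChain_split hc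
  have h2' := arcChain_cons.mp h2
  refine Relation.ReflTransGen.trans
    (walk_reach N h2'.2 (fun f hf => hpos f (by simp [hf]))) ?_
  have h3 := walk_reach N h1 (fun f hf => hpos f (by simp [hf]))
  rw [← h2'.1] at h3
  exact h3

theorem reach_trans_mono {V : Type*} {R R' : V → V → Prop}
    (h : ∀ p q, R p q → Relation.ReflTransGen R' p q)
    {p q : V} (hr : Relation.ReflTransGen R p q) : Relation.ReflTransGen R' p q := by
  induction hr with
  | refl => exact Relation.ReflTransGen.refl
  | tail _ h2 ih => exact ih.trans (h _ _ h2)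

end AuxNet

theorem sumBEq_eq {A B' : Type*} [DecidableEq A] [DecidableEq B'] :
    (Sum.instBEq : BEq (A ⊕ B')) = instBEqOfDecidableEq := by
  have h : ∀ e f : A ⊕ B', ((e == f) : Bool) = decide (e = f) := by
    rintro (a | a) (b | b)
    · show decide (a = b) = _
      simp [decide_eq_decide]
    · show false = _
      simp
    · show false = _
      simp
    · show decide (a = b) = _
      simp [decide_eq_decide]
  show BEq.mk _ = BEq.mk _
  congr 1
  funext e f
  exact h e f

instance sumLawfulBEq {A B' : Type*} [DecidableEq A] [DecidableEq B'] :
    LawfulBEq (A ⊕ B') := by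
  rw [sumBEq_eq]
  infer_instance

theorem count_indep {α : Type*} [BEq α] [LawfulBEq α] [DecidableEq α] (a : α) (l : List α) :
    l.count a = @List.count α instBEqOfDecidableEq a l := by
  induction l with
  | nil => rfl
  | cons b l ih => simp [List.count_cons, ih, beq_iff_eq]

/-- Reversal of a residual arc. -/
def revArc {A : Type*} : A ⊕ A → A ⊕ A := Sum.elim Sum.inr Sum.inl

/-- Augmenting a maximum flow along a residual cycle `B` by its residual capacity
`m = u_x(B)` leaves the residual reachability classes `V_x(s)`, `V_x(t)` and the set of
between-cut nodes unchanged. -/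
theorem reachability_invariant_under_cycle_augmentation {V A : Type*}
    [Fintype A] [DecidableEq V] [DecidableEq A] (N : Network V A)
    (x : A → ℤ) (hx : N.IsMaxFlow x)
    (p : V) (B : List (A ⊕ A)) (hB : N.IsResCycle x p B)
    (m : ℤ) (hub : ∀ e ∈ B, m ≤ N.resCap x e) (hmem : ∃ e ∈ B, N.resCap x e = m) :
    let x' : A → ℤ := fun a =>
      x a + ((B.count (Sum.inl a) : ℤ) - (B.count (Sum.inr a) : ℤ)) * m
    ∀ v : V,
      (N.ResReach x N.s v ↔ N.ResReach x' N.s v) ∧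
      (N.ResReach x v N.t ↔ N.ResReach x' v N.t) ∧
      ((¬ N.ResReach x N.s v ∧ ¬ N.ResReach x v N.t) ↔
        (¬ N.ResReach x' N.s v ∧ ¬ N.ResReach x' v N.t)) := by
  intro x' v
  obtain ⟨⟨hcB, hpB⟩, hne, hnd⟩ := hB
  have hBnd : B.Nodup := hnd.of_map
  have hm : 0 < m := by
    obtain ⟨e, he, heq⟩ := hmem
    exact heq ▸ hpB e he
  have hx'def : ∀ a, x' a = x a + ((B.count (Sum.inl a) : ℤ) - B.count (Sum.inr a)) * m :=
    fun a => rfl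
  have hcnt : ∀ e : A ⊕ A, B.count e ≤ 1 := fun e =>
    List.nodup_iff_count_le_one.mp hBnd e
  -- positivity of reversed arcs in x'
  have hrevpos : ∀ f ∈ B, 0 < N.resCap x' (revArc f) := by
    intro f hf
    rcases f with a | a
    · have h1 : B.count (Sum.inl a) = 1 := by
        have := List.count_pos_iff.mpr hf
        have := hcnt (Sum.inl a); omega
      show 0 < x' a
      rw [hx'def a, h1]
      by_cases h2 : Sum.inr a ∈ B
      · have hub2 := hub _ h2
        simp only [Network.resCap, Sum.elim_inr] at hub2
        have h2' : B.count (Sum.inr a) = 1 := by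
          have := List.count_pos_iff.mpr h2
          have := hcnt (Sum.inr a); omega
        rw [h2']; push_cast; linarith
      · have h2' : B.count (Sum.inr a) = 0 := List.count_eq_zero.mpr h2
        have hx0 : 0 ≤ x a := (hx.1.1 a).1
        rw [h2']; push_cast; linarith
    · have h1 : B.count (Sum.inr a) = 1 := by
        have := List.count_pos_iff.mpr hf
        have := hcnt (Sum.inr a); omega
      show 0 < N.u a - x' a
      rw [hx'def a, h1]
      by_cases h2 : Sum.inl a ∈ B
      · have hub2 := hub _ h2
        simp only [Network.resCap, Sum.elim_inl] at hub2
        have h2' : B.count (Sum.inl a) = 1 := by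
          have := List.count_pos_iff.mpr h2
          have := hcnt (Sum.inl a); omega
        rw [h2']; push_cast; linarith
      · have h2' : B.count (Sum.inl a) = 0 := List.count_eq_zero.mpr h2
        have hx0 : x a ≤ N.u a := (hx.1.1 a).2
        rw [h2']; push_cast; linarith
  -- reversed cycle is a residual cycle for x'
  have hcRev : ArcChain N.resTail N.resHead p p ((B.map revArc).reverse) :=
    arcChain_revMap revArc (fun e => by cases e <;> rfl) (fun e => by cases e <;> rfl) hcB
  have hpRev : ∀ g ∈ (B.map revArc).reverse, 0 < N.resCap x' g := by
    intro g hg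
    rw [List.mem_reverse, List.mem_map] at hg
    obtain ⟨f, hf, rfl⟩ := hg
    exact hrevpos f hf
  have haround : ∀ e ∈ B, N.ResReach x (N.resHead e) (N.resTail e) :=
    fun e he => around N hcB hpB he
  have haround' : ∀ e ∈ B, N.ResReach x' (N.resTail e) (N.resHead e) := by
    intro e he
    have hmem' : revArc e ∈ (B.map revArc).reverse := by
      rw [List.mem_reverse]; exact List.mem_map_of_mem he
    have h := around N hcRev hpRev hmem'
    cases e with
    | inl a => exact h
    | inr a => exact h
  have hnn : ∀ e : A ⊕ A, (0:ℤ) ≤ (B.count e : ℤ) := fun e => Int.natCast_nonneg _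
  -- step lemmas
  have step2 : ∀ e : A ⊕ A, 0 < N.resCap x e → N.ResReach x' (N.resTail e) (N.resHead e) := by
    intro e he
    by_cases h' : 0 < N.resCap x' e
    · exact Relation.ReflTransGen.single ⟨e, h', rfl, rfl⟩
    · push_neg at h'
      rcases e with a | a
      · simp only [Network.resCap, Sum.elim_inl] at he h'
        rw [hx'def a] at h'
        have hc : (0:ℤ) < (B.count (Sum.inl a) : ℤ) - B.count (Sum.inr a) := by
          by_contra hcc; push_neg at hcc
          nlinarith
        have hmem2 : Sum.inl a ∈ B := by
          rw [← List.count_pos_iff]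
          have := hnn (Sum.inr a); omega
        exact haround' _ hmem2
      · simp only [Network.resCap, Sum.elim_inr] at he h'
        rw [hx'def a] at h'
        have hc : (B.count (Sum.inl a) : ℤ) - B.count (Sum.inr a) < 0 := by
          by_contra hcc; push_neg at hcc
          nlinarith
        have hmem2 : Sum.inr a ∈ B := by
          rw [← List.count_pos_iff]
          have := hnn (Sum.inl a); omega
        exact haround' _ hmem2
  have step1 : ∀ e : A ⊕ A, 0 < N.resCap x' e → N.ResReach x (N.resTail e) (N.resHead e) := by
    intro e he
    by_cases h' : 0 < N.resCap x e
    · exact Relation.ReflTransGen.single ⟨e, h', rfl, rfl⟩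
    · push_neg at h'
      rcases e with a | a
      · simp only [Network.resCap, Sum.elim_inl] at he h'
        rw [hx'def a] at he
        have hc : (B.count (Sum.inl a) : ℤ) - B.count (Sum.inr a) < 0 := by
          by_contra hcc; push_neg at hcc
          nlinarith
        have hmem2 : Sum.inr a ∈ B := by
          rw [← List.count_pos_iff]
          have := hnn (Sum.inl a); omega
        exact haround _ hmem2
      · simp only [Network.resCap, Sum.elim_inr] at he h'
        rw [hx'def a] at he
        have hc : (0:ℤ) < (B.count (Sum.inl a) : ℤ) - B.count (Sum.inr a) := by
          by_contra hcc; push_neg at hcc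
          nlinarith
        have hmem2 : Sum.inl a ∈ B := by
          rw [← List.count_pos_iff]
          have := hnn (Sum.inr a); omega
        exact haround _ hmem2
  have dir1 : ∀ a b : V, N.ResReach x a b → N.ResReach x' a b := by
    intro a b h
    refine reach_trans_mono ?_ h
    rintro pp qq ⟨e, hc, rfl, rfl⟩
    exact step2 e hc
  have dir2 : ∀ a b : V, N.ResReach x' a b → N.ResReach x a b := by
    intro a b h
    refine reach_trans_mono ?_ h
    rintro pp qq ⟨e, hc, rfl, rfl⟩
    exact step1 e hc
  have i1 : N.ResReach x N.s v ↔ N.ResReach x' N.s v := ⟨dir1 _ _, dir2 _ _⟩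
  have i2 : N.ResReach x v N.t ↔ N.ResReach x' v N.t := ⟨dir1 _ _, dir2 _ _⟩
  exact ⟨i1, i2, by rw [i1, i2]⟩
end

section
/- Let x be a maximum s-t flow in a network N. Then every directed cycle C in the residual network N_x lies entirely within exactly one of the three vertex classes: V_x(s) (nodes reachable from s), V_x(t) (nodes that can reach t), or the complement V \ (V_x(s) ∪ V_x(t)). -/
namespace Network
variable {V A : Type*} (N : Network V A)

lemma walk_reach (x : A → ℤ) :
    ∀ (l : List (A ⊕ A)) (p q : V), N.IsResWalk x p q l → N.ResReach x p q := by
  intro l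
  induction l with
  | nil =>
    intro p q h
    have : p = q := h.1
    subst this
    exact Relation.ReflTransGen.refl
  | cons e l ih =>
    intro p q h
    obtain ⟨⟨hte, hchain⟩, hcap⟩ := h
    have h1 : N.ResReach x p (N.resHead e) :=
      Relation.ReflTransGen.single ⟨e, hcap e (by simp), hte, rfl⟩
    exact h1.trans (ih (N.resHead e) q ⟨hchain, fun f hf => hcap f (by simp [hf])⟩)

lemma walk_reach_mem (x : A → ℤ) :
    ∀ (l : List (A ⊕ A)) (p q : V), N.IsResWalk x p q l → ∀ e ∈ l,
      N.ResReach x p (N.resHead e) ∧ N.ResReach x (N.resHead e) q := by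
  intro l
  induction l with
  | nil => intro p q _ e he; simp at he
  | cons f l ih =>
    intro p q h e he
    obtain ⟨⟨htf, hchain⟩, hcap⟩ := h
    have hstep : N.ResReach x p (N.resHead f) :=
      Relation.ReflTransGen.single ⟨f, hcap f (by simp), htf, rfl⟩
    have hwalk' : N.IsResWalk x (N.resHead f) q l :=
      ⟨hchain, fun g hg => hcap g (by simp [hg])⟩
    rcases List.mem_cons.mp he with rfl | hel
    · exact ⟨hstep, N.walk_reach x l _ q hwalk'⟩
    · obtain ⟨h1, h2⟩ := ih (N.resHead f) q hwalk' e hel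
      exact ⟨hstep.trans h1, h2⟩

end Network

/-- For a maximum `s`-`t` flow, every cycle in the residual network lies entirely within
one of the three vertex classes: `V_x(s)`, `V_x(t)`, or the between-cut complement. -/
theorem residual_cycle_in_one_class {V A : Type*}
    [Fintype A] [DecidableEq V] (N : Network V A)
    (x : A → ℤ) (hfeas : N.Feasible x) (hmax : ¬ N.ResReach x N.s N.t)
    (p : V) (C : List (A ⊕ A)) (hC : N.IsResCycle x p C) :
    (∀ v ∈ p :: C.map N.resHead, N.ResReach x N.s v) ∨
    (∀ v ∈ p :: C.map N.resHead, N.ResReach x v N.t) ∨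
    (∀ v ∈ p :: C.map N.resHead, ¬ N.ResReach x N.s v ∧ ¬ N.ResReach x v N.t) := by
  obtain ⟨hwalk, hne, hnodup⟩ := hC
  have hrv : ∀ v ∈ p :: C.map N.resHead, N.ResReach x p v ∧ N.ResReach x v p := by
    intro v hv
    rcases List.mem_cons.mp hv with rfl | hv'
    · exact ⟨Relation.ReflTransGen.refl, Relation.ReflTransGen.refl⟩
    · obtain ⟨e, he, rfl⟩ := List.mem_map.mp hv'
      exact N.walk_reach_mem x C p p hwalk e he
  by_cases hs : N.ResReach x N.s p
  · exact Or.inl fun v hv => hs.trans (hrv v hv).1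
  by_cases ht : N.ResReach x p N.t
  · exact Or.inr (Or.inl fun v hv => (hrv v hv).2.trans ht)
  · refine Or.inr (Or.inr fun v hv => ⟨fun h => hs (h.trans (hrv v hv).2),
      fun h => ht ((hrv v hv).1.trans h)⟩)
end

section
/- Let x be a static maximum s-t flow in a network N whose residual network (with unit-capacity arc copies) N_x^{u=1} contains no cycle of negative transit time. Let B be a cycle in N_x^{u=1} with transit time τ(B) = 0 and let x' = x + χ^B. Then the residual network N_{x'} also contains no cycle of negative transit time. -/
namespace MyAux

/-! ### Generic chain lemmas -/
section Chains
variable {W E : Type*} {tl hd : E → W}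

lemma chain_append : ∀ (l : List E) (p q r : W) (m : List E),
    ArcChain tl hd p q l → ArcChain tl hd q r m → ArcChain tl hd p r (l ++ m)
  | [], p, q, r, m, h1, h2 => by cases h1; simpa using h2
  | e :: l, p, q, r, m, h1, h2 => by
    obtain ⟨h0, h1⟩ := h1
    exact ⟨h0, chain_append l _ q r m h1 h2⟩

lemma chain_split : ∀ (l : List E) (m : List E) (p r : W),
    ArcChain tl hd p r (l ++ m) → ∃ q, ArcChain tl hd p q l ∧ ArcChain tl hd q r m
  | [], m, p, r, h => ⟨p, rfl, h⟩
  | e :: l, m, p, r, h => by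
    obtain ⟨h0, h1⟩ := h
    obtain ⟨q, hq1, hq2⟩ := chain_split l m (hd e) r h1
    exact ⟨q, ⟨h0, hq1⟩, hq2⟩

lemma sub_cons : ∀ {l : List E} {a : E} {t : List E}, (a :: t).Sublist l →
    ∃ s r, l = s ++ a :: r ∧ t.Sublist r := by
  intro l
  induction l with
  | nil => intro a t h; simp at h
  | cons b l ih =>
    intro a t h
    cases h with
    | cons _ h' => obtain ⟨s, r, rfl, hr⟩ := ih h'; exact ⟨b :: s, r, rfl, hr⟩
    | cons_cons _ h' => exact ⟨[], l, rfl, h'⟩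

lemma cycle_of_dup (l : List E) (p q : W) (h : ArcChain tl hd p q l)
    (hnd : ¬ (l.map hd).Nodup) :
    ∃ r m, ArcChain tl hd r r m ∧ m ≠ [] ∧ m.length < l.length ∧ ∀ e ∈ m, e ∈ l := by
  rw [List.nodup_iff_sublist] at hnd
  push_neg at hnd
  obtain ⟨v, hv⟩ := hnd
  rw [List.sublist_map_iff] at hv
  obtain ⟨l', hl', hmap⟩ := hv
  obtain ⟨e₁, t, rfl, he₁, hmap2⟩ := List.map_eq_cons_iff.mp hmap.symm
  obtain ⟨e₂, t2, rfl, he₂, hmap3⟩ := List.map_eq_cons_iff.mp hmap2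
  have ht2 : t2 = [] := by simpa using hmap3.symm
  subst ht2
  obtain ⟨s, r, rfl, hr⟩ := sub_cons hl'
  obtain ⟨s₂, r₂, rfl, -⟩ := sub_cons hr
  obtain ⟨q₁, -, hc1⟩ := chain_split s _ p q h
  obtain ⟨hte₁, hc2⟩ := hc1
  obtain ⟨q₂, hc3, hc4⟩ := chain_split s₂ _ (hd e₁) q hc2
  obtain ⟨hte₂, -⟩ := hc4
  refine ⟨v, s₂ ++ [e₂], ?_, by simp, by simp; omega, ?_⟩
  · apply chain_append s₂ _ q₂ _ [e₂] (he₁ ▸ hc3)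
    exact ⟨hte₂, he₂⟩
  · intro e he
    simp only [List.mem_append, List.mem_cons, List.mem_singleton] at he ⊢
    tauto

lemma exists_simple_cycle : ∀ (n : ℕ) (l : List E), l.length ≤ n → ∀ (p q : W),
    ArcChain tl hd p q l → ¬ (l.map hd).Nodup →
    ∃ r m, ArcChain tl hd r r m ∧ m ≠ [] ∧ (m.map hd).Nodup ∧ ∀ e ∈ m, e ∈ l := by
  intro n
  induction n with
  | zero =>
    intro l hl p q h hnd
    have : l = [] := List.length_eq_zero_iff.mp (Nat.le_zero.mp hl)
    subst this; simp at hnd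
  | succ n ih =>
    intro l hl p q h hnd
    obtain ⟨r, m, hc, hne, hlen, hsub⟩ := cycle_of_dup l p q h hnd
    by_cases hnd' : (m.map hd).Nodup
    · exact ⟨r, m, hc, hne, hnd', hsub⟩
    · obtain ⟨r', m', hc', hne', hnd'', hsub'⟩ := ih m (by omega) r r hc hnd'
      exact ⟨r', m', hc', hne', hnd'', fun e he => hsub e (hsub' e he)⟩

lemma exists_long_walk [DecidableEq W] (S : E → Prop)
    (hcont : ∀ v, (∃ e, S e ∧ hd e = v) → ∃ e, S e ∧ tl e = v)
    (e0 : E) (h0 : S e0) : ∀ n : ℕ, ∃ q l, (l : List E).length = n ∧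
      ArcChain tl hd (hd e0) q l ∧ (∀ e ∈ l, S e) ∧ ∃ e, S e ∧ hd e = q := by
  intro n
  induction n with
  | zero => exact ⟨hd e0, [], rfl, rfl, by simp, e0, h0, rfl⟩
  | succ n ih =>
    obtain ⟨q, l, hlen, hc, hS, hinv⟩ := ih
    obtain ⟨e', he', hte'⟩ := hcont q hinv
    refine ⟨hd e', l ++ [e'], by simp [hlen], ?_, ?_, e', he', rfl⟩
    · exact chain_append l _ q _ [e'] hc ⟨hte', rfl⟩
    · intro e he
      rcases List.mem_append.mp he with h | h
      · exact hS e h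
      · simp at h; subst h; exact he'

lemma exists_support_cycle [Fintype E] [DecidableEq W] (S : E → Prop)
    (hcont : ∀ v, (∃ e, S e ∧ hd e = v) → ∃ e, S e ∧ tl e = v)
    (e0 : E) (h0 : S e0) :
    ∃ r m, ArcChain tl hd r r m ∧ m ≠ [] ∧ (m.map hd).Nodup ∧ ∀ e ∈ m, S e := by
  classical
  obtain ⟨q, l, hlen, hc, hS, -⟩ :=
    exists_long_walk S hcont e0 h0 ((Finset.univ.image hd).card + 1)
  have hnd : ¬ (l.map hd).Nodup := by
    intro hnd
    have hsub : (l.map hd).toFinset ⊆ Finset.univ.image hd := by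
      intro v hv
      simp only [List.mem_toFinset, List.mem_map] at hv
      obtain ⟨e, -, rfl⟩ := hv
      exact Finset.mem_image_of_mem hd (Finset.mem_univ e)
    have := Finset.card_le_card hsub
    rw [List.toFinset_card_of_nodup hnd] at this
    simp [hlen] at this
  obtain ⟨r, m, hc', hne, hnd', hsub⟩ :=
    exists_simple_cycle l.length l le_rfl _ q hc hnd
  exact ⟨r, m, hc', hne, hnd', fun e he => hS e (hsub e he)⟩

end Chains

/-! ### Net arc counts -/

instance mySumLawfulBEq {A B : Type*} [BEq A] [LawfulBEq A] [BEq B] [LawfulBEq B] :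
    LawfulBEq (A ⊕ B) where
  eq_of_beq := by
    intro a b h
    cases a <;> cases b <;> first
      | (exact congrArg _ (eq_of_beq h)) | (exact absurd h (by exact Bool.false_ne_true))
  rfl := by
    intro a
    cases a with
    | inl a => exact (ReflBEq.rfl : (a == a) = true)
    | inr b => exact (ReflBEq.rfl : (b == b) = true)

lemma myCountLeOne {α : Type*} [BEq α] [LawfulBEq α] {l : List α} (h : l.Nodup) (x : α) :
    l.count x ≤ 1 := by
  induction l with
  | nil => simp
  | cons e l ih =>
    rw [List.count_cons]
    obtain ⟨he, hl⟩ := List.nodup_cons.mp h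
    by_cases hex : e = x
    · subst hex
      have : l.count e = 0 := List.count_eq_zero.mpr he
      simp [this]
    · have : (e == x) = false := beq_eq_false_iff_ne.mpr hex
      simp [this]
      exact ih hl

section Counts
variable {A : Type*} [DecidableEq A]

def netc (l : List (A ⊕ A)) (a : A) : ℤ :=
  (l.count (Sum.inl a) : ℤ) - (l.count (Sum.inr a) : ℤ)

lemma netc_nil (a : A) : netc ([] : List (A ⊕ A)) a = 0 := by simp [netc]

lemma netc_cons (e : A ⊕ A) (l : List (A ⊕ A)) (a : A) :
    netc (e :: l) a = netc l a + ((if e = Sum.inl a then 1 else 0)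
      - (if e = Sum.inr a then 1 else 0)) := by
  simp only [netc, List.count_cons, beq_iff_eq]
  split_ifs <;> push_cast <;> omega

lemma map_resC_sum [Fintype A] (w : A → ℤ) :
    ∀ l : List (A ⊕ A), (l.map (resC w)).sum = ∑ a : A, netc l a * w a := by
  intro l
  induction l with
  | nil => simp [netc_nil]
  | cons e l ih =>
    simp only [List.map_cons, List.sum_cons, ih]
    rw [Finset.sum_congr rfl (fun a _ => by rw [netc_cons]; split_ifs <;> ring :
      ∀ a ∈ Finset.univ, netc (e :: l) a * w a =
        netc l a * w a + ((if e = Sum.inl a then w a else 0)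
          - (if e = Sum.inr a then w a else 0)))]
    rw [Finset.sum_add_distrib, Finset.sum_sub_distrib]
    rcases e with b | b <;> simp [resC, Finset.sum_ite_eq] <;> ring

lemma netc_mem_inl {l : List (A ⊕ A)} {a : A} (h : 0 < netc l a) : Sum.inl a ∈ l := by
  by_contra hm
  rw [← List.count_eq_zero] at hm
  simp [netc, hm] at h
  omega

lemma netc_mem_inr {l : List (A ⊕ A)} {a : A} (h : netc l a < 0) : Sum.inr a ∈ l := by
  by_contra hm
  rw [← List.count_eq_zero] at hm
  simp [netc, hm] at h
  omega

lemma netc_bounds {l : List (A ⊕ A)} (hnd : l.Nodup) (a : A) :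
    -1 ≤ netc l a ∧ netc l a ≤ 1 := by
  have h1 := myCountLeOne hnd (Sum.inl a)
  have h2 := myCountLeOne hnd (Sum.inr a)
  unfold netc
  omega

lemma netc_eq_one {l : List (A ⊕ A)} (hnd : l.Nodup) {a : A}
    (h : Sum.inl a ∈ l) (h2 : Sum.inr a ∉ l) : netc l a = 1 := by
  have h1 := myCountLeOne hnd (Sum.inl a)
  have h3 := List.count_pos_iff.mpr h
  rw [← List.count_eq_zero] at h2
  unfold netc
  omega

lemma netc_eq_neg_one {l : List (A ⊕ A)} (hnd : l.Nodup) {a : A}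
    (h : Sum.inr a ∈ l) (h2 : Sum.inl a ∉ l) : netc l a = -1 := by
  have h1 := myCountLeOne hnd (Sum.inr a)
  have h3 := List.count_pos_iff.mpr h
  rw [← List.count_eq_zero] at h2
  unfold netc
  omega

lemma netc_eq_zero {l : List (A ⊕ A)} {a : A}
    (h : Sum.inl a ∉ l) (h2 : Sum.inr a ∉ l) : netc l a = 0 := by
  rw [← List.count_eq_zero] at h h2
  unfold netc
  omega

lemma netc_nonpos_of_not_inl {l : List (A ⊕ A)} {a : A} (h : Sum.inl a ∉ l) :
    netc l a ≤ 0 := by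
  rw [← List.count_eq_zero] at h
  unfold netc
  omega

lemma netc_nonneg_of_not_inr {l : List (A ⊕ A)} {a : A} (h : Sum.inr a ∉ l) :
    0 ≤ netc l a := by
  rw [← List.count_eq_zero] at h
  unfold netc
  omega

end Counts

/-! ### Divergence -/
section DVG
variable {V A : Type*} [Fintype A] [DecidableEq V] [DecidableEq A] (N : Network V A)

def dvg (f : A → ℤ) (v : V) : ℤ :=
  (∑ a : A, if N.head a = v then f a else 0) - (∑ a : A, if N.tail a = v then f a else 0)

lemma dvg_congr {f g : A → ℤ} (h : ∀ a, f a = g a) (v : V) : dvg N f v = dvg N g v := by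
  unfold dvg
  rw [Finset.sum_congr rfl (fun a _ => by rw [h a]),
    Finset.sum_congr rfl (fun a _ => by rw [h a] :
      ∀ a ∈ Finset.univ, (if N.tail a = v then f a else 0) = (if N.tail a = v then g a else 0))]

lemma dvg_add (f g : A → ℤ) (v : V) :
    dvg N (fun a => f a + g a) v = dvg N f v + dvg N g v := by
  unfold dvg
  rw [Finset.sum_congr rfl (fun a _ => by split_ifs <;> ring :
      ∀ a ∈ Finset.univ, (if N.head a = v then f a + g a else 0)
        = (if N.head a = v then f a else 0) + (if N.head a = v then g a else 0)),
    Finset.sum_congr rfl (fun a _ => by split_ifs <;> ring :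
      ∀ a ∈ Finset.univ, (if N.tail a = v then f a + g a else 0)
        = (if N.tail a = v then f a else 0) + (if N.tail a = v then g a else 0)),
    Finset.sum_add_distrib, Finset.sum_add_distrib]
  ring

lemma dvg_sub (f g : A → ℤ) (v : V) :
    dvg N (fun a => f a - g a) v = dvg N f v - dvg N g v := by
  have h := dvg_add N (fun a => f a - g a) g v
  rw [dvg_congr N (fun a => by ring : ∀ a, (fun a => f a - g a) a + g a = f a)] at h
  omega

lemma sum_if_point (P : A → Prop) [DecidablePred P] (b : A) (c : ℤ) :
    (∑ a : A, if P a then (if b = a then c else 0) else 0) = if P b then c else 0 := by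
  rw [Finset.sum_congr rfl (fun a _ => by
      by_cases hba : b = a
      · subst hba; simp
      · simp [hba] :
    ∀ a ∈ Finset.univ, (if P a then (if b = a then c else 0) else 0)
      = if b = a then (if P b then c else 0) else 0)]
  rw [Finset.sum_ite_eq]
  simp

lemma dvg_point (b : A) (c : ℤ) (v : V) :
    dvg N (fun a => if b = a then c else 0) v
      = (if N.head b = v then c else 0) - (if N.tail b = v then c else 0) := by
  unfold dvg
  rw [sum_if_point (fun a => N.head a = v) b c, sum_if_point (fun a => N.tail a = v) b c]

lemma dvg_delta (e : A ⊕ A) (v : V) :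
    dvg N (fun a => (if e = Sum.inl a then 1 else 0) - (if e = Sum.inr a then 1 else 0)) v
      = (if N.resHead e = v then 1 else 0) - (if N.resTail e = v then 1 else 0) := by
  rcases e with b | b
  · rw [dvg_congr N (fun a => by simp :
      ∀ a, ((if (Sum.inl b : A ⊕ A) = Sum.inl a then (1:ℤ) else 0)
        - (if (Sum.inl b : A ⊕ A) = Sum.inr a then 1 else 0)) = (if b = a then 1 else 0))]
    rw [dvg_point]
    rfl
  · rw [dvg_congr N (fun a => by by_cases h : b = a <;> simp [h] :
      ∀ a, ((if (Sum.inr b : A ⊕ A) = Sum.inl a then (1:ℤ) else 0)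
        - (if (Sum.inr b : A ⊕ A) = Sum.inr a then 1 else 0)) = (if b = a then -1 else 0))]
    rw [dvg_point]
    show _ = (if N.tail b = v then (1:ℤ) else 0) - (if N.head b = v then 1 else 0)
    split_ifs <;> ring

lemma dvg_chain : ∀ (l : List (A ⊕ A)) (p q : V),
    ArcChain N.resTail N.resHead p q l → ∀ v : V,
    dvg N (netc l) v = (if q = v then 1 else 0) - (if p = v then 1 else 0) := by
  intro l
  induction l with
  | nil =>
    intro p q h v
    cases h
    rw [dvg_congr N (netc_nil) v]
    show dvg N (fun _ => (0:ℤ)) v = _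
    simp [dvg]
  | cons e l ih =>
    intro p q h v
    obtain ⟨h1, h2⟩ := h
    rw [dvg_congr N (netc_cons e l) v, dvg_add, ih _ q h2 v, dvg_delta, h1]
    split_ifs <;> ring

lemma continuation (x : A → ℤ) (g : A → ℤ) (hdvg : ∀ v, dvg N g v = 0) (v : V) :
    (∃ e, 0 < resC g e ∧ N.resHead e = v) → ∃ e, 0 < resC g e ∧ N.resTail e = v := by
  rintro ⟨e, he, hev⟩
  by_contra hout
  push_neg at hout
  have h1 : ∀ a, N.tail a = v → g a ≤ 0 := by
    intro a ha
    by_contra h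
    push_neg at h
    exact hout (Sum.inl a) (show (0:ℤ) < g a from h) ha
  have h2 : ∀ a, N.head a = v → 0 ≤ g a := by
    intro a ha
    by_contra h
    push_neg at h
    exact hout (Sum.inr a) (show (0:ℤ) < -g a by omega) ha
  have hd := hdvg v
  unfold dvg at hd
  have hge : 0 ≤ ∑ a : A, if N.head a = v then g a else 0 :=
    Finset.sum_nonneg (fun a _ => by split_ifs with h <;> first | exact h2 a h | exact le_refl 0)
  have hle : (∑ a : A, if N.tail a = v then g a else 0) ≤ 0 :=
    Finset.sum_nonpos (fun a _ => by split_ifs with h <;> first | exact h1 a h | exact le_refl 0)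
  have hA : (∑ a : A, if N.head a = v then g a else 0) = 0 := by omega
  have hB : (∑ a : A, if N.tail a = v then g a else 0) = 0 := by omega
  have hA' := (Finset.sum_eq_zero_iff_of_nonneg
    (fun a _ => by split_ifs with h <;> first | exact h2 a h | exact le_refl 0)).mp hA
  have hB' := (Finset.sum_eq_zero_iff_of_nonpos
    (fun a _ => by split_ifs with h <;> first | exact h1 a h | exact le_refl 0)).mp hB
  rcases e with b | b
  · have h3 : (if N.head b = v then g b else 0) = 0 := hA' b (Finset.mem_univ b)
    have hbv : N.head b = v := hev
    rw [if_pos hbv] at h3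
    have : (0:ℤ) < g b := he
    omega
  · have h3 : (if N.tail b = v then g b else 0) = 0 := hB' b (Finset.mem_univ b)
    have hbv : N.tail b = v := hev
    rw [if_pos hbv] at h3
    have : (0:ℤ) < -g b := he
    omega

end DVG
end MyAux

namespace MyAux
section Main
variable {V A : Type*} [Fintype A] [DecidableEq V] [DecidableEq A] (N : Network V A)

lemma main_nonneg (τ : A → ℕ) (x : A → ℤ)
    (hno' : ∀ (r : V) (m : List (A ⊕ A)), N.IsResCycle x r m →
      0 ≤ ∑ a : A, netc m a * (τ a : ℤ)) :
    ∀ n : ℕ, ∀ g : A → ℤ, (∑ a : A, |g a|) ≤ (n : ℤ) → (∀ v, dvg N g v = 0) →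
      (∀ a, 0 < g a → x a < N.u a) → (∀ a, g a < 0 → 0 < x a) →
      0 ≤ ∑ a : A, g a * (τ a : ℤ) := by
  intro n
  induction n with
  | zero =>
    intro g hb _ _ _
    have h0 : (∑ a : A, |g a|) = 0 :=
      le_antisymm (by exact_mod_cast hb) (Finset.sum_nonneg (fun a _ => abs_nonneg _))
    have hz := (Finset.sum_eq_zero_iff_of_nonneg (fun a _ => abs_nonneg (g a))).mp h0
    have : (∑ a : A, g a * (τ a : ℤ)) = 0 := Finset.sum_eq_zero (fun a _ => by
      have : g a = 0 := abs_eq_zero.mp (hz a (Finset.mem_univ a))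
      rw [this]; ring)
    omega
  | succ n ih =>
    intro g hb hdvg hpos hneg
    by_cases hg0 : ∀ a, g a = 0
    · have : (∑ a : A, g a * (τ a : ℤ)) = 0 :=
        Finset.sum_eq_zero (fun a _ => by rw [hg0 a]; ring)
      omega
    · push_neg at hg0
      obtain ⟨a0, ha0⟩ := hg0
      have he0 : ∃ e0 : A ⊕ A, 0 < resC g e0 := by
        rcases lt_or_gt_of_ne ha0 with h | h
        · exact ⟨Sum.inr a0, show (0:ℤ) < -g a0 by omega⟩
        · exact ⟨Sum.inl a0, h⟩
      obtain ⟨e0, he0⟩ := he0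
      obtain ⟨r, m, hchain, hne, hndhd, hsupp⟩ :=
        exists_support_cycle (tl := N.resTail) (hd := N.resHead)
          (fun e => 0 < resC g e) (continuation N x g hdvg) e0 he0
      have hmnd : m.Nodup := List.Nodup.of_map _ hndhd
      have hSpos : ∀ a : A, Sum.inl a ∈ m → 0 < g a := fun a ha => hsupp _ ha
      have hSneg : ∀ a : A, Sum.inr a ∈ m → g a < 0 := fun a ha => by
        have : (0:ℤ) < -g a := hsupp _ ha
        omega
      have hcyc : N.IsResCycle x r m := by
        refine ⟨⟨hchain, fun e he => ?_⟩, hne, hndhd⟩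
        rcases e with b | b
        · show (0:ℤ) < N.u b - x b
          have := hpos b (hSpos b he)
          omega
        · show (0:ℤ) < x b
          exact hneg b (hSneg b he)
      have hτm := hno' r m hcyc
      have hkey : ∀ a : A, (|g a - netc m a| ≤ |g a|) ∧ (0 < g a - netc m a → 0 < g a) ∧
          (g a - netc m a < 0 → g a < 0) ∧ (netc m a ≠ 0 → |g a - netc m a| < |g a|) := by
        intro a
        by_cases hi : Sum.inl a ∈ m
        · have hg : 0 < g a := hSpos a hi
          have hr : Sum.inr a ∉ m := fun hr => absurd (hSneg a hr) (by omega)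
          have h1 : netc m a = 1 := netc_eq_one hmnd hi hr
          rw [h1, abs_of_pos hg, abs_of_nonneg (show (0:ℤ) ≤ g a - 1 by omega)]
          omega
        · by_cases hr : Sum.inr a ∈ m
          · have hg : g a < 0 := hSneg a hr
            have h1 : netc m a = -1 := netc_eq_neg_one hmnd hr hi
            rw [h1, abs_of_neg hg, abs_of_nonpos (show g a - (-1) ≤ 0 by omega)]
            omega
          · have h1 : netc m a = 0 := netc_eq_zero hi hr
            rw [h1]
            refine ⟨by simp, fun h => by omega, fun h => by omega, fun h => absurd rfl h⟩
      have hstrict : ∃ a : A, |g a - netc m a| < |g a| := by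
        obtain ⟨e, he⟩ := List.exists_mem_of_ne_nil m hne
        rcases e with b | b
        · have hr : Sum.inr b ∉ m := fun hr => absurd (hSneg b hr)
            (by have := hSpos b he; omega)
          exact ⟨b, (hkey b).2.2.2 (by rw [netc_eq_one hmnd he hr]; omega)⟩
        · have hil : Sum.inl b ∉ m := fun hil => absurd (hSneg b he)
            (by have := hSpos b hil; omega)
          exact ⟨b, (hkey b).2.2.2 (by rw [netc_eq_neg_one hmnd he hil]; omega)⟩
      have hlt : (∑ a : A, |g a - netc m a|) < ∑ a : A, |g a| := by
        obtain ⟨a1, ha1⟩ := hstrict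
        exact Finset.sum_lt_sum (fun a _ => (hkey a).1) ⟨a1, Finset.mem_univ a1, ha1⟩
      have hsum' : (∑ a : A, |g a - netc m a|) ≤ (n : ℤ) := by
        have : ((n:ℤ) + 1) = ((n+1 : ℕ) : ℤ) := by push_cast; ring
        omega
      have hdvg' : ∀ v, dvg N (fun a => g a - netc m a) v = 0 := by
        intro v
        rw [dvg_sub, hdvg v, dvg_chain N m r r hchain v]
        ring
      have ih' := ih (fun a => g a - netc m a) hsum' hdvg'
        (fun a h => hpos a ((hkey a).2.1 h)) (fun a h => hneg a ((hkey a).2.2.1 h))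
      have hsplit : (∑ a : A, g a * (τ a : ℤ))
          = (∑ a : A, (g a - netc m a) * (τ a : ℤ)) + ∑ a : A, netc m a * (τ a : ℤ) := by
        rw [← Finset.sum_add_distrib]
        exact Finset.sum_congr rfl (fun a _ => by ring)
      rw [hsplit]
      exact add_nonneg ih' hτm

end Main
end MyAux

/-- resTT as resC -/
lemma myResTT_eq {A : Type*} (τ : A → ℕ) : resTT τ = resC (fun a => (τ a : ℤ)) :=
  funext (fun e => by cases e <;> rfl)


/-- If the residual network of a maximum flow `x` has no cycle of negative transit time,
then after augmenting along a residual cycle `B` of zero transit time (by one unit,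
`x' = x + χ^B`), the new residual network still has no cycle of negative transit time. -/
theorem no_negative_transit_cycle_after_zero_augmentation {V A : Type*}
    [Fintype A] [DecidableEq V] [DecidableEq A] (N : Network V A) (τ : A → ℕ)
    (x : A → ℤ) (hx : N.IsMaxFlow x)
    (hno : ∀ (q : V) (l : List (A ⊕ A)), N.IsResCycle x q l → 0 ≤ (l.map (resTT τ)).sum)
    (p : V) (B : List (A ⊕ A)) (hB : N.IsResCycle x p B)
    (hτB : (B.map (resTT τ)).sum = 0) :
    let x' : A → ℤ := fun a =>
      x a + ((B.count (Sum.inl a) : ℤ) - (B.count (Sum.inr a) : ℤ))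
    ∀ (q : V) (l : List (A ⊕ A)), N.IsResCycle x' q l → 0 ≤ (l.map (resTT τ)).sum := by
  intro x' q l hl
  obtain ⟨⟨hlchain, hlcap⟩, hlne, hlnd⟩ := hl
  obtain ⟨⟨hBchain, hBcap⟩, hBne, hBnd⟩ := hB
  have hBnodup : B.Nodup := List.Nodup.of_map _ hBnd
  have hlnodup : l.Nodup := List.Nodup.of_map _ hlnd
  have hsum : ∀ m : List (A ⊕ A),
      (m.map (resTT τ)).sum
        = ∑ a : A, MyAux.netc m a * (τ a : ℤ) := by
    intro m
    rw [myResTT_eq τ]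
    exact MyAux.map_resC_sum _ m
  rw [hsum] at hτB
  rw [hsum]
  set g : A → ℤ := fun a => MyAux.netc B a + MyAux.netc l a with hgdef
  have hx' : ∀ a, x' a = x a + MyAux.netc B a := fun a => rfl
  have hdvg : ∀ v, MyAux.dvg N g v = 0 := by
    intro v
    rw [hgdef, MyAux.dvg_add, MyAux.dvg_chain N B p p hBchain v,
      MyAux.dvg_chain N l q q hlchain v]
    ring
  have hBbd := fun a => MyAux.netc_bounds hBnodup a
  have hlbd := fun a => MyAux.netc_bounds hlnodup a
  have hpos : ∀ a, 0 < g a → x a < N.u a := by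
    intro a hga
    by_cases hi : Sum.inl a ∈ B
    · have : (0:ℤ) < N.u a - x a := hBcap _ hi
      omega
    · have hBle : MyAux.netc B a ≤ 0 := MyAux.netc_nonpos_of_not_inl hi
      have hCl : 0 < MyAux.netc l a := by
        have := hlbd a; have := hBbd a; simp only [hgdef] at hga; omega
      have hmem := MyAux.netc_mem_inl hCl
      have hcap : (0:ℤ) < N.u a - x' a := hlcap _ hmem
      rw [hx' a] at hcap
      have hB0 : MyAux.netc B a = 0 := by
        have := hlbd a; simp only [hgdef] at hga; omega
      omega
  have hneg : ∀ a, g a < 0 → 0 < x a := by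
    intro a hga
    by_cases hi : Sum.inr a ∈ B
    · exact hBcap _ hi
    · have hBge : 0 ≤ MyAux.netc B a := MyAux.netc_nonneg_of_not_inr hi
      have hCl : MyAux.netc l a < 0 := by
        have := hlbd a; have := hBbd a; simp only [hgdef] at hga; omega
      have hmem := MyAux.netc_mem_inr hCl
      have hcap : (0:ℤ) < x' a := hlcap _ hmem
      rw [hx' a] at hcap
      have hB0 : MyAux.netc B a = 0 := by
        have := hlbd a; simp only [hgdef] at hga; omega
      omega
  have hno' : ∀ (r : V) (m : List (A ⊕ A)), N.IsResCycle x r m →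
      0 ≤ ∑ a : A, MyAux.netc m a * (τ a : ℤ) := by
    intro r m hc
    rw [← hsum]
    exact hno r m hc
  have hmain := MyAux.main_nonneg N τ x hno' (∑ a : A, |g a|).toNat g
    (Int.self_le_toNat _) hdvg hpos hneg
  have hsplit : (∑ a : A, g a * (τ a : ℤ))
      = (∑ a : A, MyAux.netc B a * (τ a : ℤ)) + ∑ a : A, MyAux.netc l a * (τ a : ℤ) := by
    rw [← Finset.sum_add_distrib]
    exact Finset.sum_congr rfl (fun a _ => by rw [hgdef]; ring)
  rw [hsplit, hτB] at hmain
  omega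
end

section
/- Let f be a flow over time in the time-expanded network N^{[1,θ]} that is repeated during [θ₁, θ₂]. For any walk W in the residual network N_{φ(f)} of the projected static flow and any layer θ' with θ₁ ≤ θ' ≤ θ₂ − h_{φ(f)}(W), the lifting lift(W, θ') is a walk in the residual time-expanded network N^{[θ₁,θ₂]}_f, and its projection π(lift(W, θ')) equals W. -/
/-- A flow over time network: directed multigraph, source, sink, integral capacities and
transit times. -/
structure FOTN (V A : Type*) where
  tail : A → V
  head : A → V
  s : V
  t : V
  u : A → ℤ
  τ : A → ℕ

/-- Base arc of a residual arc. -/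
def arcBase {A : Type*} : A ⊕ A → A := Sum.elim id id

/-- Lift a list of residual arcs starting at (integer) time `t`; each arc `e` is assigned
the layer of the copy it traverses, i.e. the smaller of its two endpoint times. -/
def liftFrom {E : Type*} (g : E → ℤ) : ℤ → List E → List (E × ℕ)
  | _, [] => []
  | t, e :: l => (e, (t + min 0 (g e)).toNat) :: liftFrom g (t + g e) l

/-- The lifting of a walk to layer `θ'`: start at time `max θ' (θ' - h⁻)`. -/
def liftW {E : Type*} (g : E → ℤ) (l : List E) (θ' : ℕ) : List (E × ℕ) :=
  liftFrom g ((θ' : ℤ) - min 0 (hlo g l)) l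

namespace FOTN
variable {V A : Type*} (N : FOTN V A)

/-- Tail of a residual arc in the base network. -/
def bTail : A ⊕ A → V := Sum.elim N.tail N.head

def bHead : A ⊕ A → V := Sum.elim N.head N.tail

/-- Residual capacity in the base network with respect to a static flow `x`. -/
def bCap (x : A → ℤ) : A ⊕ A → ℤ := Sum.elim (fun a => N.u a - x a) x

/-- A walk in the residual network `N_x` of the base network. -/
def IsResWalk (x : A → ℤ) (p q : V) (l : List (A ⊕ A)) : Prop :=
  ArcChain N.bTail N.bHead p q l ∧ ∀ e ∈ l, 0 < N.bCap x e

/-- A cycle in the residual network `N_x` of the base network. -/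
def IsResCycle (x : A → ℤ) (p : V) (l : List (A ⊕ A)) : Prop :=
  N.IsResWalk x p p l ∧ l ≠ [] ∧ (l.map N.bHead).Nodup

/-- Tail of a residual time-expanded arc `(e, ℓ)`: the copy `a^ℓ` of `a` goes from layer
`ℓ` to layer `ℓ + τ(a)`; backward arcs are reversed. -/
def teTail : (A ⊕ A) × ℕ → V × ℕ
  | (Sum.inl a, ℓ) => (N.tail a, ℓ)
  | (Sum.inr a, ℓ) => (N.head a, ℓ + N.τ a)

def teHead : (A ⊕ A) × ℕ → V × ℕ
  | (Sum.inl a, ℓ) => (N.head a, ℓ + N.τ a)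
  | (Sum.inr a, ℓ) => (N.tail a, ℓ)

/-- Residual capacity of a time-expanded residual arc with respect to a flow over time. -/
def teCap (f : A → ℕ → ℤ) : (A ⊕ A) × ℕ → ℤ
  | (Sum.inl a, ℓ) => N.u a - f a ℓ
  | (Sum.inr a, ℓ) => f a ℓ

/-- The arc lies between layers `θ₁` and `θ₂` of the time-expanded network. -/
def InLayers (θ₁ θ₂ : ℕ) (e : (A ⊕ A) × ℕ) : Prop :=
  θ₁ ≤ e.2 ∧ e.2 + N.τ (arcBase e.1) ≤ θ₂

/-- Membership in the residual time-expanded network `N^{[θ₁,θ₂]}_f`. -/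
def InResTEN (f : A → ℕ → ℤ) (θ₁ θ₂ : ℕ) (e : (A ⊕ A) × ℕ) : Prop :=
  0 < N.teCap f e ∧ N.InLayers θ₁ θ₂ e

/-- A walk in the residual time-expanded network `N^{[θ₁,θ₂]}_f`. -/
def IsTENWalk (f : A → ℕ → ℤ) (θ₁ θ₂ : ℕ) (p q : V × ℕ) (l : List ((A ⊕ A) × ℕ)) : Prop :=
  ArcChain N.teTail N.teHead p q l ∧ ∀ e ∈ l, N.InResTEN f θ₁ θ₂ e

/-- A cycle in the residual time-expanded network `N^{[θ₁,θ₂]}_f`. -/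
def IsTENCycle (f : A → ℕ → ℤ) (θ₁ θ₂ : ℕ) (p : V × ℕ) (l : List ((A ⊕ A) × ℕ)) : Prop :=
  N.IsTENWalk f θ₁ θ₂ p p l ∧ l ≠ [] ∧ (l.map N.teHead).Nodup

/-- A flow over time with time horizon `θ`, as a static flow in the time-expanded
network: capacities, support on the existing copies `a^ℓ`, `ℓ ∈ {1,…,θ-1}`, and flow
conservation at every node other than the super-terminals (i.e. at all `v ≠ s, t`). -/
def IsFlowOverTime [Fintype A] [DecidableEq V] (f : A → ℕ → ℤ) (θ : ℕ) : Prop :=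
  (∀ a ℓ, 0 ≤ f a ℓ ∧ f a ℓ ≤ N.u a) ∧
  (∀ a ℓ, ¬(1 ≤ ℓ ∧ ℓ + 1 ≤ θ) → f a ℓ = 0) ∧
  (∀ v, v ≠ N.s → v ≠ N.t → ∀ ℓ : ℕ,
    (∑ a : A, if N.head a = v then f a (ℓ - N.τ a) else 0) =
    (∑ a : A, if N.tail a = v then f a ℓ else 0))

/-- `f` is repeated during `[θ₁, θ₂]`. -/
def Repeated (_Nw : FOTN V A) (f : A → ℕ → ℤ) (θ₁ θ₂ : ℕ) : Prop :=
  ∀ a : A, ∀ ℓ : ℕ, θ₁ ≤ ℓ → ℓ < θ₂ → f a ℓ = f a (ℓ + 1)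

/-- The projection `φ(f)(a) := f(a^{θ₁})`. -/
def proj (_Nw : FOTN V A) (f : A → ℕ → ℤ) (θ₁ : ℕ) : A → ℤ := fun a => f a θ₁

end FOTN

lemma zero_mem_psums {E : Type*} (g : E → ℤ) (l : List E) : (0 : ℤ) ∈ psums g l := by
  cases l <;> simp [psums]

lemma foldr_min_le {b z : ℤ} {L : List ℤ} (h : z ∈ L) : L.foldr min b ≤ z := by
  induction L with
  | nil => simp at h
  | cons x xs ih =>
    rcases List.mem_cons.mp h with h | h
    · simp [h, min_le_left]
    · exact le_trans (min_le_right _ _) (ih h)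

lemma le_foldr_max {b z : ℤ} {L : List ℤ} (h : z ∈ L) : z ≤ L.foldr max b := by
  induction L with
  | nil => simp at h
  | cons x xs ih =>
    rcases List.mem_cons.mp h with h | h
    · simp [h, le_max_left]
    · exact le_trans (ih h) (le_max_right _ _)

lemma foldr_min_le_base {b : ℤ} (L : List ℤ) : L.foldr min b ≤ b := by
  induction L with
  | nil => simp
  | cons x xs ih => exact le_trans (min_le_right _ _) ih

lemma rep_eq {V A : Type*} (N : FOTN V A) (f : A → ℕ → ℤ) (θ₁ θ₂ : ℕ)
    (hrep : N.Repeated f θ₁ θ₂) (a : A) :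
    ∀ ℓ, θ₁ ≤ ℓ → ℓ ≤ θ₂ → f a ℓ = f a θ₁ := by
  intro ℓ h1
  induction ℓ, h1 using Nat.le_induction with
  | base => intro _; rfl
  | succ n hn ih =>
    intro h
    rw [← hrep a n hn (by omega)]
    exact ih (by omega)

lemma lift_aux {V A : Type*} (N : FOTN V A) (f : A → ℕ → ℤ) (θ₁ θ₂ : ℕ)
    (heq : ∀ a ℓ, θ₁ ≤ ℓ → ℓ ≤ θ₂ → f a ℓ = f a θ₁) :
    ∀ (l : List (A ⊕ A)) (p q : V) (t : ℤ),
      ArcChain N.bTail N.bHead p q l →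
      (∀ e ∈ l, 0 < N.bCap (N.proj f θ₁) e) →
      (∀ z ∈ psums (resTT N.τ) l, (θ₁ : ℤ) ≤ t + z ∧ t + z ≤ (θ₂ : ℤ)) →
      ArcChain N.teTail N.teHead (p, t.toNat)
        (q, (t + (l.map (resTT N.τ)).sum).toNat) (liftFrom (resTT N.τ) t l) ∧
      (∀ e ∈ liftFrom (resTT N.τ) t l, N.InResTEN f θ₁ θ₂ e) ∧
      (liftFrom (resTT N.τ) t l).map Prod.fst = l := by
  intro l
  induction l with
  | nil =>
    intro p q t hc _ _
    refine ⟨?_, by simp [liftFrom], by simp [liftFrom]⟩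
    have : p = q := hc
    simp [liftFrom, ArcChain, this]
  | cons e l ih =>
    intro p q t hc hcap hb
    obtain ⟨hte, hch⟩ := hc
    have h0 : (θ₁ : ℤ) ≤ t + 0 ∧ t + 0 ≤ (θ₂ : ℤ) :=
      hb 0 (by simp [psums, zero_mem_psums])
    have h1 : (θ₁ : ℤ) ≤ t + resTT N.τ e ∧ t + resTT N.τ e ≤ (θ₂ : ℤ) := by
      have : resTT N.τ e + 0 ∈ psums (resTT N.τ) (e :: l) := by
        simp only [psums, List.mem_cons]
        exact Or.inr (List.mem_map_of_mem (zero_mem_psums _ _))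
      simpa using hb _ this
    have hb' : ∀ z ∈ psums (resTT N.τ) l,
        (θ₁ : ℤ) ≤ (t + resTT N.τ e) + z ∧ (t + resTT N.τ e) + z ≤ (θ₂ : ℤ) := by
      intro z hz
      have : resTT N.τ e + z ∈ psums (resTT N.τ) (e :: l) := by
        simp only [psums, List.mem_cons]
        exact Or.inr (List.mem_map_of_mem hz)
      have := hb _ this
      constructor <;> linarith [this.1, this.2]
    have hcape := hcap e List.mem_cons_self
    have hcap' : ∀ a ∈ l, 0 < N.bCap (N.proj f θ₁) a :=
      fun a ha => hcap a (List.mem_cons_of_mem _ ha)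
    obtain ⟨IH1, IH2, IH3⟩ := ih (N.bHead e) q (t + resTT N.τ e) hch hcap' hb'
    cases e with
    | inl a =>
      have hg : resTT N.τ (Sum.inl a) = (N.τ a : ℤ) := rfl
      have hmin : min 0 (resTT N.τ (Sum.inl a)) = 0 := by
        rw [hg]; omega
      have htnn : 0 ≤ t := by have := h0.1; omega
      refine ⟨⟨?_, ?_⟩, ?_, ?_⟩
      · -- tail matches
        show N.teTail (Sum.inl a, (t + min 0 (resTT N.τ (Sum.inl a))).toNat) = (p, t.toNat)
        rw [hmin]
        simp only [FOTN.teTail, add_zero]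
        have : N.tail a = p := hte
        rw [this]
      · -- rest of chain
        show ArcChain N.teTail N.teHead
          (N.teHead (Sum.inl a, (t + min 0 (resTT N.τ (Sum.inl a))).toNat)) _ _
        rw [hmin]
        have hhd : N.teHead (Sum.inl a, (t + 0).toNat)
            = (N.bHead (Sum.inl a), (t + resTT N.τ (Sum.inl a)).toNat) := by
          simp only [FOTN.teHead, FOTN.bHead, Sum.elim_inl, hg, add_zero]
          congr 1
          omega
        rw [hhd, List.map_cons, List.sum_cons, ← add_assoc]
        exact IH1
      · intro x hx
        rcases List.mem_cons.mp hx with hx | hx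
        · subst hx
          rw [hmin, add_zero]
          have hl1 : θ₁ ≤ t.toNat := by have := h0.1; omega
          have hl2 : t.toNat + N.τ a ≤ θ₂ := by
            have := h1.2; rw [hg] at this; omega
          refine ⟨?_, hl1, by simpa [arcBase] using hl2⟩
          show 0 < N.u a - f a t.toNat
          rw [heq a t.toNat hl1 (by omega)]
          simpa [FOTN.bCap, FOTN.proj] using hcape
        · exact IH2 x hx
      · simp only [liftFrom, List.map_cons, IH3]
    | inr a =>
      have hg : resTT N.τ (Sum.inr a) = -(N.τ a : ℤ) := rfl
      have hmin : min 0 (resTT N.τ (Sum.inr a)) = -(N.τ a : ℤ) := by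
        rw [hg]; omega
      have htnn : 0 ≤ t - N.τ a := by have := h1.1; rw [hg] at this; omega
      refine ⟨⟨?_, ?_⟩, ?_, ?_⟩
      · show N.teTail (Sum.inr a, (t + min 0 (resTT N.τ (Sum.inr a))).toNat) = (p, t.toNat)
        rw [hmin]
        simp only [FOTN.teTail]
        have : N.head a = p := hte
        rw [this]
        congr 1
        omega
      · show ArcChain N.teTail N.teHead
          (N.teHead (Sum.inr a, (t + min 0 (resTT N.τ (Sum.inr a))).toNat)) _ _
        rw [hmin]
        have hhd : N.teHead (Sum.inr a, (t + -(N.τ a : ℤ)).toNat)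
            = (N.bHead (Sum.inr a), (t + resTT N.τ (Sum.inr a)).toNat) := by
          simp only [FOTN.teHead, FOTN.bHead, Sum.elim_inr, hg]
        rw [hhd, List.map_cons, List.sum_cons, ← add_assoc]
        exact IH1
      · intro x hx
        rcases List.mem_cons.mp hx with hx | hx
        · subst hx
          rw [hmin]
          have hl1 : θ₁ ≤ (t + -(N.τ a : ℤ)).toNat := by
            have := h1.1; rw [hg] at this; omega
          have hl2 : (t + -(N.τ a : ℤ)).toNat + N.τ a ≤ θ₂ := by
            have := h0.2; omega
          refine ⟨?_, hl1, by simpa [arcBase] using hl2⟩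
          show 0 < f a (t + -(N.τ a : ℤ)).toNat
          rw [heq a _ hl1 (by omega)]
          simpa [FOTN.bCap, FOTN.proj] using hcape
        · exact IH2 x hx
      · simp only [liftFrom, List.map_cons, IH3]

/-- For a flow over time `f` repeated during `[θ₁, θ₂]` and a walk `W` in the residual
network of the projected static flow `φ(f)`, for every layer `θ'` with
`θ₁ ≤ θ'` and `θ' + h(W) ≤ θ₂`, the lifting `lift(W, θ')` is a walk in the residual
time-expanded network `N^{[θ₁,θ₂]}_f`, and its projection equals `W`. -/
theorem lifting_is_walk_and_projects_back {V A : Type*}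
    [Fintype A] [DecidableEq V] (N : FOTN V A) (hτ : ∀ a, N.τ a ≤ 1)
    (f : A → ℕ → ℤ) (θ θ₁ θ₂ : ℕ)
    (hf : N.IsFlowOverTime f θ) (hrep : N.Repeated f θ₁ θ₂)
    (h1 : 1 ≤ θ₁) (h2 : θ₁ + 2 ≤ θ₂) (h3 : θ₂ + 1 ≤ θ)
    (p q : V) (W : List (A ⊕ A)) (hW : N.IsResWalk (N.proj f θ₁) p q W)
    (θ' : ℕ) (hθ'lo : θ₁ ≤ θ') (hθ'hi : (θ' : ℤ) + spreadOf (resTT N.τ) W ≤ θ₂) :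
    N.IsTENWalk f θ₁ θ₂
      (p, ((θ' : ℤ) - min 0 (hlo (resTT N.τ) W)).toNat)
      (q, ((θ' : ℤ) - min 0 (hlo (resTT N.τ) W) + (W.map (resTT N.τ)).sum).toNat)
      (liftW (resTT N.τ) W θ') ∧
    (liftW (resTT N.τ) W θ').map Prod.fst = W := by
  set g := resTT N.τ
  have heq := rep_eq N f θ₁ θ₂ hrep
  have hlo_nonpos : hlo g W ≤ 0 := foldr_min_le_base _
  have hmin : min 0 (hlo g W) = hlo g W := by omega
  set t : ℤ := (θ' : ℤ) - min 0 (hlo g W) with ht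
  have hinv : ∀ z ∈ psums g W, (θ₁ : ℤ) ≤ t + z ∧ t + z ≤ (θ₂ : ℤ) := by
    intro z hz
    have hlz : hlo g W ≤ z := foldr_min_le hz
    have hzh : z ≤ hhi g W := le_foldr_max hz
    have hsp := hθ'hi
    simp only [spreadOf] at hsp
    constructor
    · rw [ht, hmin]; omega
    · rw [ht, hmin]; omega
  obtain ⟨H1, H2, H3⟩ :=
    lift_aux N f θ₁ θ₂ (fun a ℓ h1 h2 => heq a ℓ h1 h2) W p q t hW.1 hW.2 hinv
  exact ⟨⟨H1, H2⟩, H3⟩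
end
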